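/- Let n ≥ 2 and let F : [0,1]^3 → [0,1]^3 implement the basic coloring f₀ⁿ. Then every fixpoint of F lies within L∞ distance 2^{-n} of the point 2^{-n}(1,1,1). -/
import Mathlib


/-- α = 2^{-2n} -/
noncomputable def alphaOf (n : ℕ) : ℝ := 2 ^ (-(2 * n : ℤ))

/-- The displacement vectors δ_0 = (−α,−α,−α), δ_1 = (α,0,0), δ_2 = (0,α,0), δ_3 = (0,0,α). -/
noncomputable def deltaOf (n : ℕ) (c : Fin 4) : Fin 3 → ℝ :=
  if c = 0 then (fun _ => -alphaOf n)
  else if c = 1 then (fun m => if m = 0 then alphaOf n else 0)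
  else if c = 2 then (fun m => if m = 1 then alphaOf n else 0)
  else (fun m => if m = 2 then alphaOf n else 0)

/-- Center of the cubelet K_{ijk}: the point 2^{-n}(i + 1/2, j + 1/2, k + 1/2). -/
noncomputable def cubeletCenter (n : ℕ) (i j k : Fin (2 ^ n)) : Fin 3 → ℝ :=
  fun m => (2 : ℝ) ^ (-(n : ℤ)) * (((![(i : ℕ), (j : ℕ), (k : ℕ)] m : ℕ) : ℝ) + 1 / 2)

/-- A cubelet K_{ijk} is exterior if some index equals 0 or 2^n − 1. -/
def ExteriorCubelet (n : ℕ) (i j k : Fin (2 ^ n)) : Prop :=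
  i.val = 0 ∨ j.val = 0 ∨ k.val = 0 ∨
    i.val = 2 ^ n - 1 ∨ j.val = 2 ^ n - 1 ∨ k.val = 2 ^ n - 1

/-- The bmf boundary conditions on a coloring f. -/
def BMFBoundary (n : ℕ) (f : Fin (2 ^ n) → Fin (2 ^ n) → Fin (2 ^ n) → Fin 4) : Prop :=
  ∀ i j k : Fin (2 ^ n),
    (i.val = 0 → f i j k = 1) ∧
    (j.val = 0 → 0 < i.val → f i j k = 2) ∧
    (k.val = 0 → 0 < i.val → 0 < j.val → f i j k = 3) ∧
    (ExteriorCubelet n i j k → 0 < i.val → 0 < j.val → 0 < k.val → f i j k = 0)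

/-- A continuous map F : [0,1]³ → [0,1]³ implements the coloring f :
(a) at each cubelet center, F(x) = x + δ_{f(i,j,k)};
(b) everywhere, F(x) − x lies in the convex hull of the δ-vectors of the cubelets
whose centers lie within L∞ distance 2^{-n} of x. -/
def Implements (n : ℕ) (f : Fin (2 ^ n) → Fin (2 ^ n) → Fin (2 ^ n) → Fin 4)
    (F : (Fin 3 → ℝ) → Fin 3 → ℝ) : Prop :=
  ContinuousOn F (Set.Icc 0 1) ∧
  Set.MapsTo F (Set.Icc 0 1) (Set.Icc 0 1) ∧
  (∀ i j k : Fin (2 ^ n),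
    F (cubeletCenter n i j k) = cubeletCenter n i j k + deltaOf n (f i j k)) ∧
  (∀ x ∈ Set.Icc (0 : Fin 3 → ℝ) 1,
    F x - x ∈ convexHull ℝ
      {v : Fin 3 → ℝ | ∃ i j k : Fin (2 ^ n),
        dist x (cubeletCenter n i j k) ≤ (2 : ℝ) ^ (-(n : ℤ)) ∧ v = deltaOf n (f i j k)})

/-- The basic coloring f₀ⁿ: colors forced by the bmf boundary conditions, and 0 everywhere else. -/
def basicColoring (n : ℕ) : Fin (2 ^ n) → Fin (2 ^ n) → Fin (2 ^ n) → Fin 4 :=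
  fun i j k =>
    if i.val = 0 then 1
    else if j.val = 0 then 2
    else if k.val = 0 then 3
    else 0

/-- every fixpoint of an implementation of the basic coloring f₀ⁿ lies within
L∞ distance 2^{-n} of the point 2^{-n}(1,1,1). -/
noncomputable def L3 (a : Fin 3 → ℝ) : (Fin 3 → ℝ) →ₗ[ℝ] ℝ where
  toFun v := a 0 * v 0 + a 1 * v 1 + a 2 * v 2
  map_add' u v := by simp [Pi.add_apply]; ring
  map_smul' r v := by simp [Pi.smul_apply, smul_eq_mul]; ring

lemma hull_sep {S : Set (Fin 3 → ℝ)} (a : Fin 3 → ℝ) (t : ℝ) (ht : t ≠ 0)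
    (hS : ∀ v ∈ S, a 0 * v 0 + a 1 * v 1 + a 2 * v 2 = t) :
    (0 : Fin 3 → ℝ) ∉ convexHull ℝ S := by
  intro h0
  have hconv : Convex ℝ {v : Fin 3 → ℝ | L3 a v = t} :=
    (convex_singleton t).linear_preimage (L3 a)
  have h2 := convexHull_min (fun v hv => (hS v hv : L3 a v = t)) hconv h0
  apply ht
  rw [← h2]
  show a 0 * (0:ℝ) + a 1 * 0 + a 2 * 0 = 0
  ring

lemma exists_color (n : ℕ) (x : Fin 3 → ℝ)
    (h0 : (0 : Fin 3 → ℝ) ∈ convexHull ℝ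
      {v : Fin 3 → ℝ | ∃ i j k : Fin (2 ^ n),
        dist x (cubeletCenter n i j k) ≤ (2 : ℝ) ^ (-(n : ℤ)) ∧
          v = deltaOf n (basicColoring n i j k)})
    (c : Fin 4) :
    ∃ i j k : Fin (2 ^ n), dist x (cubeletCenter n i j k) ≤ (2 : ℝ) ^ (-(n : ℤ)) ∧
      basicColoring n i j k = c := by
  have hα : (0:ℝ) < alphaOf n := by unfold alphaOf; positivity
  by_contra hno
  push_neg at hno
  fin_cases c
  · refine hull_sep ![1,1,1] (alphaOf n) (ne_of_gt hα) ?_ h0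
    rintro v ⟨i, j, k, hd, rfl⟩
    have hne := hno i j k hd
    generalize basicColoring n i j k = c' at hne ⊢
    clear hd hno h0
    fin_cases c' <;>
      first
        | exact absurd rfl hne
        | (simp [deltaOf]; try ring)
  · refine hull_sep ![3,-1,-1] (-alphaOf n) (by linarith) ?_ h0
    rintro v ⟨i, j, k, hd, rfl⟩
    have hne := hno i j k hd
    generalize basicColoring n i j k = c' at hne ⊢
    clear hd hno h0
    fin_cases c' <;>
      first
        | exact absurd rfl hne
        | (simp [deltaOf]; try ring)
  · refine hull_sep ![-1,3,-1] (-alphaOf n) (by linarith) ?_ h0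
    rintro v ⟨i, j, k, hd, rfl⟩
    have hne := hno i j k hd
    generalize basicColoring n i j k = c' at hne ⊢
    clear hd hno h0
    fin_cases c' <;>
      first
        | exact absurd rfl hne
        | (simp [deltaOf]; try ring)
  · refine hull_sep ![-1,-1,3] (-alphaOf n) (by linarith) ?_ h0
    rintro v ⟨i, j, k, hd, rfl⟩
    have hne := hno i j k hd
    generalize basicColoring n i j k = c' at hne ⊢
    clear hd hno h0
    fin_cases c' <;>
      first
        | exact absurd rfl hne
        | (simp [deltaOf]; try ring)

set_option maxHeartbeats 1000000 in
theorem fixpoint_of_basic_near_corner (n : ℕ) (hn : 2 ≤ n)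
    (F : (Fin 3 → ℝ) → Fin 3 → ℝ) (hF : Implements n (basicColoring n) F)
    (x : Fin 3 → ℝ) (hx : x ∈ Set.Icc (0 : Fin 3 → ℝ) 1) (hfix : F x = x) :
    dist x (fun _ : Fin 3 => (2 : ℝ) ^ (-(n : ℤ))) ≤ (2 : ℝ) ^ (-(n : ℤ)) := by
  obtain ⟨-, -, -, hhull⟩ := hF
  have h0 := hhull x hx
  rw [hfix, sub_self] at h0

  have hpos : (0:ℝ) < (2:ℝ) ^ (-(n:ℤ)) := by positivity
  obtain ⟨i1, j1, k1, hd1, hc1⟩ := exists_color n x h0 1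
  obtain ⟨i2, j2, k2, hd2, hc2⟩ := exists_color n x h0 2
  obtain ⟨i3, j3, k3, hd3, hc3⟩ := exists_color n x h0 3
  obtain ⟨i0, j0, k0, hd0, hc0⟩ := exists_color n x h0 0
  have h1i : i1.val = 0 := by
    by_contra hI
    simp only [basicColoring, if_neg hI] at hc1
    split_ifs at hc1 <;> exact absurd hc1 (by decide)
  have h2 : j2.val = 0 ∧ ¬ i2.val = 0 := by
    simp only [basicColoring] at hc2
    split_ifs at hc2 with ha hb hcc
    · exact absurd hc2 (by decide)
    · exact ⟨hb, ha⟩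
    · exact absurd hc2 (by decide)
    · exact absurd hc2 (by decide)
  have h3 : k3.val = 0 ∧ ¬ j3.val = 0 := by
    simp only [basicColoring] at hc3
    split_ifs at hc3 with ha hb hcc
    · exact absurd hc3 (by decide)
    · exact absurd hc3 (by decide)
    · exact ⟨hcc, hb⟩
    · exact absurd hc3 (by decide)
  have h0k : ¬ k0.val = 0 := by
    simp only [basicColoring] at hc0
    split_ifs at hc0 with ha hb hcc
    · exact absurd hc0 (by decide)
    · exact absurd hc0 (by decide)
    · exact absurd hc0 (by decide)
    · exact hcc
  have hi2 : (1:ℝ) ≤ ((i2:ℕ):ℝ) := by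
    exact_mod_cast Nat.one_le_cast.mpr (Nat.pos_of_ne_zero h2.2)
  have hj3 : (1:ℝ) ≤ ((j3:ℕ):ℝ) := by
    exact_mod_cast Nat.one_le_cast.mpr (Nat.pos_of_ne_zero h3.2)
  have hk0 : (1:ℝ) ≤ ((k0:ℕ):ℝ) := by
    exact_mod_cast Nat.one_le_cast.mpr (Nat.pos_of_ne_zero h0k)
  have b1 := (dist_pi_le_iff hpos.le).1 hd1 0
  have b2a := (dist_pi_le_iff hpos.le).1 hd2 0
  have b2b := (dist_pi_le_iff hpos.le).1 hd2 1
  have b3a := (dist_pi_le_iff hpos.le).1 hd3 1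
  have b3b := (dist_pi_le_iff hpos.le).1 hd3 2
  have b0 := (dist_pi_le_iff hpos.le).1 hd0 2
  simp only [cubeletCenter, Matrix.cons_val_zero, Matrix.cons_val_one, Matrix.head_cons,
    Matrix.cons_val_two, Matrix.tail_cons, Real.dist_eq, h1i, h2.1, h3.1,
    Nat.cast_zero] at b1 b2a b2b b3a b3b b0
  rw [abs_le] at b1 b2a b2b b3a b3b b0
  rw [dist_pi_le_iff hpos.le]
  intro m
  have hm : x m = x 0 ∨ x m = x 1 ∨ x m = x 2 := by
    fin_cases m
    · exact Or.inl rfl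
    · exact Or.inr (Or.inl rfl)
    · exact Or.inr (Or.inr rfl)
  show |x m - (2:ℝ) ^ (-(n:ℤ))| ≤ (2:ℝ) ^ (-(n:ℤ))
  rw [abs_le]
  rcases hm with h | h | h <;> rw [h] <;> constructor <;> nlinarith
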